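/- Let M be an n×n real symmetric positive semidefinite matrix all of whose eigenvalues are at least 1 (equivalently, M − I is positive semidefinite). For S ⊆ {1,…,n}, let M[S,S] denote the principal submatrix of M with rows and columns indexed by S (with det M[∅,∅] = 1). Then the set function f(S) = ln det M[S,S] is monotone nondecreasing: for all S ⊆ T ⊆ {1,…,n}, det M[S,S] ≤ det M[T,T]. -/

import Mathlib

open Matrix
open scoped RealInnerProductSpace

private lemma aux_one_le_det {m : Type*} [Fintype m] [DecidableEq m]
    {N : Matrix m m ℝ} (h : (N - 1).PosSemidef) : 1 ≤ N.det := by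
  have hH : N.IsHermitian := by
    have := h.1.add (Matrix.isHermitian_one (n := m) (α := ℝ))
    simpa using this
  have heig : ∀ i, 1 ≤ hH.eigenvalues i := by
    intro i
    set v : m → ℝ := ⇑(hH.eigenvectorBasis i) with hv
    have key : 0 ≤ dotProduct (star v) ((N - 1) *ᵥ v) := h.dotProduct_mulVec_nonneg v
    have hNv : N *ᵥ v = hH.eigenvalues i • v := hH.mulVec_eigenvectorBasis i
    have hone : dotProduct v v = 1 := by
      have h1 : ‖hH.eigenvectorBasis i‖ = 1 := hH.eigenvectorBasis.orthonormal.1 i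
      have h2 : ⟪hH.eigenvectorBasis i, hH.eigenvectorBasis i⟫ = 1 := by
        rw [real_inner_self_eq_norm_sq, h1, one_pow]
      rw [EuclideanSpace.inner_eq_star_dotProduct] at h2
      simpa [hv] using h2
    simp only [sub_mulVec, one_mulVec, hNv, dotProduct_sub, dotProduct_smul,
      star_trivial, hone, smul_eq_mul, mul_one] at key
    linarith
  have hdet : N.det = ∏ i, hH.eigenvalues i := by
    simpa using hH.det_eq_prod_eigenvalues
  rw [hdet]
  have := Finset.prod_le_prod (s := Finset.univ) (f := fun _ : m => (1 : ℝ)) (g := hH.eigenvalues)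
    (fun i _ => zero_le_one) (fun i _ => heig i)
  simpa using this

/-- Maximum entropy sampling objective is monotone: if `M` is a real symmetric positive
semidefinite matrix with all eigenvalues at least `1` (equivalently, `M - I` is positive
semidefinite), then `S ⊆ T` implies `det M[S,S] ≤ det M[T,T]`. -/
theorem stmt_17 {n : ℕ} (M : Matrix (Fin n) (Fin n) ℝ)
    (hpsd : M.PosSemidef) (hpsd1 : (M - 1).PosSemidef) :
    ∀ S T : Finset (Fin n), S ⊆ T →
      (M.submatrix (fun i : S => (i : Fin n)) (fun i : S => (i : Fin n))).det ≤
      (M.submatrix (fun i : T => (i : Fin n)) (fun i : T => (i : Fin n))).det := by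
  intro S T hST
  classical
  set U : Finset (Fin n) := T \ S with hUdef
  let cS : S → Fin n := fun i => (i : Fin n)
  let cU : U → Fin n := fun i => (i : Fin n)
  let cT : T → Fin n := fun i => (i : Fin n)
  -- the equivalence S ⊕ U ≃ T
  let e : (S ⊕ U : Type) ≃ T :=
    { toFun := Sum.elim (fun x => ⟨x.1, hST x.2⟩)
        (fun x => ⟨x.1, (Finset.mem_sdiff.mp x.2).1⟩)
      invFun := fun x => if h : (x : Fin n) ∈ S then Sum.inl ⟨x, h⟩
        else Sum.inr ⟨x, Finset.mem_sdiff.mpr ⟨x.2, h⟩⟩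
      left_inv := by
        rintro (⟨x, hx⟩ | ⟨x, hx⟩)
        · simp [hx]
        · have : x ∉ S := (Finset.mem_sdiff.mp hx).2
          simp [this]
      right_inv := by
        rintro ⟨x, hx⟩
        by_cases h : x ∈ S <;> simp [h] }
  -- block decomposition of restricted matrices
  have hblock : ∀ P : Matrix (Fin n) (Fin n) ℝ,
      (P.submatrix cT cT).submatrix e e =
        fromBlocks (P.submatrix cS cS) (P.submatrix cS cU)
          (P.submatrix cU cS) (P.submatrix cU cU) := by
    intro P
    ext i j
    cases i <;> cases j <;> rfl
  set A := M.submatrix cS cS with hA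
  set B := M.submatrix cS cU with hB
  set C := M.submatrix cU cU with hC
  -- A - 1 is PSD
  have hApsd1 : (A - 1).PosSemidef := by
    have h0 : ((M - 1).submatrix cS cS) = A - 1 := by
      ext i j
      by_cases hij : i = j
      · subst hij; simp [hA, Matrix.one_apply]
      · have : cS i ≠ cS j := fun hh => hij (Subtype.coe_injective hh)
        simp [hA, Matrix.one_apply, this, hij]
    rw [← h0]
    exact hpsd1.submatrix _
  -- A is positive definite
  have hApd : A.PosDef := by
    have : ((A - 1) + 1).PosDef :=
      Matrix.PosDef.posSemidef_add hApsd1 Matrix.PosDef.one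
    simpa using this
  have hAinv : Invertible A := hApd.isUnit.invertible
  -- transpose relation
  have hMsymm : ∀ i j, M i j = M j i := by
    intro i j
    have := congrFun (congrFun hpsd.1 i) j
    simpa [Matrix.conjTranspose_apply] using this.symm
  have hBt : M.submatrix cU cS = Bᴴ := by
    ext i j
    simp [hB, Matrix.conjTranspose_apply, hMsymm (cU i) (cS j)]
  -- fromBlocks A B Bᴴ (C - 1) is PSD
  have hbig : (fromBlocks A B Bᴴ (C - 1)).PosSemidef := by
    have h1 : (((M - 1).submatrix cT cT).submatrix e e).PosSemidef :=
      Matrix.PosSemidef.submatrix (Matrix.PosSemidef.submatrix hpsd1 cT) ⇑e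
    have h2 : ((M - 1).submatrix cT cT).submatrix e e =
        fromBlocks (A - 1) B Bᴴ (C - 1) := by
      rw [hblock (M - 1)]
      have e1 : (M - 1).submatrix cS cS = A - 1 := by
        ext i j
        by_cases hij : i = j
        · subst hij; simp [hA, Matrix.one_apply]
        · have : cS i ≠ cS j := fun hh => hij (Subtype.coe_injective hh)
          simp [hA, Matrix.one_apply, this, hij]
      have e4 : (M - 1).submatrix cU cU = C - 1 := by
        ext i j
        by_cases hij : i = j
        · subst hij; simp [hC, Matrix.one_apply]
        · have : cU i ≠ cU j := fun hh => hij (Subtype.coe_injective hh)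
          simp [hC, Matrix.one_apply, this, hij]
      have e2 : (M - 1).submatrix cS cU = B := by
        ext i j
        have : cS i ≠ cU j := by
          intro hh
          have hh' : (i : Fin n) = (j : Fin n) := hh
          exact (Finset.mem_sdiff.mp j.2).2 (hh' ▸ i.2)
        simp [hB, Matrix.one_apply, this]
      have e3 : (M - 1).submatrix cU cS = Bᴴ := by
        ext i j
        have : cU i ≠ cS j := by
          intro hh
          have hh' : (i : Fin n) = (j : Fin n) := hh
          exact (Finset.mem_sdiff.mp i.2).2 (hh'.symm ▸ j.2)
        simp [hB, Matrix.conjTranspose_apply, Matrix.one_apply, this,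
          hMsymm (cU i) (cS j)]
      rw [e1, e2, e3, e4]
    have h3 : fromBlocks A B Bᴴ (C - 1) =
        fromBlocks (A - 1) B Bᴴ (C - 1) + fromBlocks 1 0 0 0 := by
      rw [Matrix.fromBlocks_add]
      simp
    rw [h3]
    refine Matrix.PosSemidef.add (h2 ▸ h1) ?_
    have h4 : (fromBlocks (1 : Matrix S S ℝ) 0 0 (0 : Matrix U U ℝ)) =
        (fromBlocks (1 : Matrix S S ℝ) 0 0 (0 : Matrix U U ℝ)) *
        (fromBlocks (1 : Matrix S S ℝ) 0 0 (0 : Matrix U U ℝ))ᴴ := by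
      rw [Matrix.fromBlocks_conjTranspose, Matrix.fromBlocks_multiply]
      simp
    rw [h4]
    exact Matrix.posSemidef_self_mul_conjTranspose _
  -- Schur complement bound
  have hschur : ((C - Bᴴ * A⁻¹ * B) - 1).PosSemidef := by
    have hx := (Matrix.PosDef.fromBlocks₁₁ B (C - 1) hApd).mp hbig
    have heq : (C - 1) - Bᴴ * A⁻¹ * B = (C - Bᴴ * A⁻¹ * B) - 1 := by
      abel
    rwa [heq] at hx
  have hdetschur : 1 ≤ (C - Bᴴ * A⁻¹ * B).det := aux_one_le_det hschur
  have hdetA : 1 ≤ A.det := aux_one_le_det hApsd1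
  -- determinant identity
  have hdetT : (M.submatrix cT cT).det = A.det * (C - Bᴴ * A⁻¹ * B).det := by
    rw [← Matrix.det_submatrix_equiv_self e, hblock M, hBt,
      Matrix.det_fromBlocks₁₁, Matrix.invOf_eq_nonsing_inv]
  calc (M.submatrix (fun i : S => (i : Fin n)) (fun i : S => (i : Fin n))).det
      = A.det * 1 := by rw [mul_one]
    _ ≤ A.det * (C - Bᴴ * A⁻¹ * B).det :=
        mul_le_mul_of_nonneg_left hdetschur (by linarith)
    _ = (M.submatrix cT cT).det := hdetT.symm
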